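/- (Generalized reciprocal convexity) Let R = R' ≥ 0 and G be n×n matrices with [[R, G],[G', R]] ⪰ 0, and define the symmetric matrix M = (G + G')/2. Let δ_0, …, δ_p ∈ R^n and let α_0, …, α_p > 0 satisfy ∑_ν α_ν = 1. Then ∑_{ν=0}^p (1/α_ν) δ_ν' R δ_ν ≥ δ' Ψ δ, where δ = (δ_0', …, δ_p')' and Ψ is the (p+1)×(p+1)-block matrix with diagonal blocks R and all off-diagonal blocks M. -/

import Mathlib

open Matrix

private lemma key_cross {n : ℕ} {R G : Matrix (Fin n) (Fin n) ℝ}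
    (hblock : (Matrix.fromBlocks R G Gᵀ R).PosSemidef)
    (x y : Fin n → ℝ) {t : ℝ} (ht : 0 < t) :
    2 * (x ⬝ᵥ G *ᵥ y) ≤ t * (x ⬝ᵥ R *ᵥ x) + t⁻¹ * (y ⬝ᵥ R *ᵥ y) := by
  set c := Real.sqrt t with hc
  have hcpos : 0 < c := Real.sqrt_pos.mpr ht
  have hc2 : c * c = t := Real.mul_self_sqrt ht.le
  have h := hblock.dotProduct_mulVec_nonneg (Sum.elim (c • x) (-(c⁻¹ • y)))
  rw [Matrix.fromBlocks_mulVec] at h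
  simp only [Sum.elim_comp_inl, Sum.elim_comp_inr, star_trivial] at h
  rw [sumElim_dotProduct_sumElim] at h
  have htrans : y ⬝ᵥ Gᵀ *ᵥ x = x ⬝ᵥ G *ᵥ y := by
    rw [Matrix.mulVec_transpose, dotProduct_comm, ← Matrix.dotProduct_mulVec]
  simp only [Matrix.mulVec_smul, Matrix.mulVec_neg, dotProduct_add, dotProduct_neg,
    neg_dotProduct, dotProduct_smul, smul_dotProduct, smul_eq_mul, smul_smul, htrans] at h
  have h1 : c * c⁻¹ = 1 := mul_inv_cancel₀ hcpos.ne'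
  have h2 : c⁻¹ * c⁻¹ = t⁻¹ := by rw [← mul_inv, hc2]
  have h' : 0 ≤ (c * c) * (x ⬝ᵥ R *ᵥ x) - (c * c⁻¹) * (x ⬝ᵥ G *ᵥ y)
      - (c * c⁻¹) * (x ⬝ᵥ G *ᵥ y) + (c⁻¹ * c⁻¹) * (y ⬝ᵥ R *ᵥ y) := by
    linear_combination h
  rw [hc2, h1, h2] at h'
  linarith

/-- Generalized reciprocal convexity (Lemma 2 of the paper):
with `[[R,G],[Gᵀ,R]] ⪰ 0`, `M = (G+Gᵀ)/2`, weights `α_ν > 0` summing to 1,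
`∑_ν (1/α_ν) δ_ν' R δ_ν ≥ δ' Ψ δ` where `Ψ` has diagonal blocks `R` and
off-diagonal blocks `M`. -/
theorem generalized_reciprocal_convexity {n p : ℕ}
    (R G : Matrix (Fin n) (Fin n) ℝ) (hRsymm : R.IsSymm) (hRpsd : R.PosSemidef)
    (hblock : (Matrix.fromBlocks R G Gᵀ R).PosSemidef)
    (δ : Fin (p + 1) → (Fin n → ℝ)) (α : Fin (p + 1) → ℝ)
    (hα : ∀ ν, 0 < α ν) (hsum : ∑ ν, α ν = 1) :
    (fun q : Fin (p + 1) × Fin n => δ q.1 q.2) ⬝ᵥ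
        (fun (q r : Fin (p + 1) × Fin n) =>
          if q.1 = r.1 then R q.2 r.2
          else ((1 / 2 : ℝ) • (G + Gᵀ)) q.2 r.2 :
          Matrix (Fin (p + 1) × Fin n) (Fin (p + 1) × Fin n) ℝ) *ᵥ
        (fun q : Fin (p + 1) × Fin n => δ q.1 q.2)
      ≤ ∑ ν, (1 / α ν) * (δ ν ⬝ᵥ R *ᵥ δ ν) := by
  classical
  set q : Fin (p + 1) → ℝ := fun μ => δ μ ⬝ᵥ R *ᵥ δ μ with hqdef
  -- expand the left-hand side as a double sum over blocks
  have expand :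
      (fun q : Fin (p + 1) × Fin n => δ q.1 q.2) ⬝ᵥ
        (fun (q r : Fin (p + 1) × Fin n) =>
          if q.1 = r.1 then R q.2 r.2
          else ((1 / 2 : ℝ) • (G + Gᵀ)) q.2 r.2 :
          Matrix (Fin (p + 1) × Fin n) (Fin (p + 1) × Fin n) ℝ) *ᵥ
        (fun q : Fin (p + 1) × Fin n => δ q.1 q.2)
      = ∑ μ, ∑ ν, (if μ = ν then δ μ ⬝ᵥ R *ᵥ δ ν
          else (1 / 2) * (δ μ ⬝ᵥ G *ᵥ δ ν + δ ν ⬝ᵥ G *ᵥ δ μ)) := by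
    simp only [dotProduct, mulVec, Fintype.sum_prod_type, Finset.mul_sum]
    refine Finset.sum_congr rfl fun μ _ => ?_
    rw [Finset.sum_comm]
    refine Finset.sum_congr rfl fun ν _ => ?_
    rcases eq_or_ne μ ν with hμν | hμν
    · subst hμν
      simp
    · simp only [if_neg hμν]
      rw [show (∑ x, ∑ i, δ ν x * (G x i * δ μ i)) = ∑ x, ∑ i, δ μ x * (G i x * δ ν i) from by
        rw [Finset.sum_comm]
        exact Finset.sum_congr rfl fun i _ => Finset.sum_congr rfl fun j _ => by ring]
      rw [mul_add, Finset.mul_sum, Finset.mul_sum, ← Finset.sum_add_distrib]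
      refine Finset.sum_congr rfl fun i _ => ?_
      rw [Finset.mul_sum, Finset.mul_sum, ← Finset.sum_add_distrib]
      refine Finset.sum_congr rfl fun j _ => ?_
      simp only [Matrix.smul_apply, Matrix.add_apply, Matrix.transpose_apply, smul_eq_mul]
      ring
  rw [expand]
  -- rewrite the RHS as a double sum
  have rhs_eq : ∑ ν, (1 / α ν) * q ν = ∑ μ, ∑ ν, α ν / α μ * q μ := by
    refine Finset.sum_congr rfl fun μ _ => ?_
    rw [← Finset.sum_mul, ← Finset.sum_div, hsum]
  rw [rhs_eq]
  have pair : ∀ μ ν, (if μ = ν then δ μ ⬝ᵥ R *ᵥ δ ν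
        else (1 / 2) * (δ μ ⬝ᵥ G *ᵥ δ ν + δ ν ⬝ᵥ G *ᵥ δ μ))
      ≤ (1 / 2 : ℝ) * (α ν / α μ * q μ + α μ / α ν * q ν) := by
    intro μ ν
    by_cases h : μ = ν
    · subst h
      simp only [hqdef, eq_self_iff_true, if_true, div_self (hα μ).ne', one_mul]
      linarith
    · simp only [if_neg h]
      have k1 := key_cross hblock (δ μ) (δ ν) (div_pos (hα ν) (hα μ))
      have k2 := key_cross hblock (δ ν) (δ μ) (div_pos (hα μ) (hα ν))
      rw [inv_div] at k1 k2
      simp only [hqdef]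
      linarith
  calc ∑ μ, ∑ ν, (if μ = ν then δ μ ⬝ᵥ R *ᵥ δ ν
          else (1 / 2) * (δ μ ⬝ᵥ G *ᵥ δ ν + δ ν ⬝ᵥ G *ᵥ δ μ))
      ≤ ∑ μ, ∑ ν, (1 / 2 : ℝ) * (α ν / α μ * q μ + α μ / α ν * q ν) :=
        Finset.sum_le_sum fun μ _ => Finset.sum_le_sum fun ν _ => pair μ ν
    _ = ∑ μ, ∑ ν, α ν / α μ * q μ := by
        simp only [mul_add, Finset.sum_add_distrib]
        rw [show (∑ μ, ∑ ν, (1 / 2 : ℝ) * (α μ / α ν * q ν))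
            = ∑ μ, ∑ ν, (1 / 2 : ℝ) * (α ν / α μ * q μ) from Finset.sum_comm]
        simp only [← Finset.sum_add_distrib]
        exact Finset.sum_congr rfl fun μ _ => Finset.sum_congr rfl fun ν _ => by ring
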